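/- If R ⊆ ℕⁿ is synchronous, then for all integers m > r ≥ 0 the relation R_{m,r} = {(m·x₁ + r, …, m·xₙ + r) : (x₁,…,xₙ) ∈ R} is synchronous. Moreover, if n = 2 and R is an order on ℕ, then R_{m,r} is an order on ℕ and (supp(R_{m,r}), R_{m,r}) is order-isomorphic to (supp(R), R). -/

import Mathlib

/-- Encoding of a tuple `x ∈ ℕⁿ` as a word of length `max_i x_i` over the alphabet
of vectors in `{0,1}ⁿ`: the `j`-th letter has `i`-th component `1` iff `j < x i`. -/
def encVec {n : ℕ} (x : Fin n → ℕ) : List (Fin n → Bool) :=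
  (List.range (Finset.univ.sup x)).map (fun j i => decide (j < x i))

/-- A relation `R ⊆ ℕⁿ` is synchronous if the language of encodings of its tuples
is regular. -/
def SyncRelN {n : ℕ} (R : Set (Fin n → ℕ)) : Prop :=
  Language.IsRegular {w : List (Fin n → Bool) | ∃ x ∈ R, encVec x = w}

/-- A binary relation on ℕ, viewed as a set of pairs in `Fin 2 → ℕ`, is synchronous. -/
def SyncRel2 (R : ℕ → ℕ → Prop) : Prop :=
  SyncRelN {x : Fin 2 → ℕ | R (x 0) (x 1)}

/-- The support of a binary relation on ℕ. -/
def supp (R : ℕ → ℕ → Prop) : Set ℕ := {x | ∃ y, R x y ∨ R y x}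

/-- A (strict partial) order on ℕ: a transitive relation with no 2-cycle
(in particular irreflexive). -/
def IsOrderRel (R : ℕ → ℕ → Prop) : Prop :=
  (∀ x y z, R x y → R y z → R x z) ∧ ¬∃ x y, R x y ∧ R y x

/-- The restriction of a relation on ℕ to its support. -/
def restrict (R : ℕ → ℕ → Prop) : supp R → supp R → Prop := fun a b => R a b

/-- The binary relation `R_{m,r}` obtained from `R` by `x ↦ m·x + r`. -/
def scaledRel (R : ℕ → ℕ → Prop) (m r : ℕ) : ℕ → ℕ → Prop :=
  fun a b => ∃ x y, R x y ∧ a = m * x + r ∧ b = m * y + r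

/-! ### Auxiliary automata constructions -/

section Automata

variable {α : Type} {σ : Type}

/-- DFA accepting `{a :: v | v ∈ M.accepts}`. -/
def consDFA (M : DFA α σ) (a : α) [DecidableEq α] : DFA α (Option (Option σ)) where
  step q b := match q with
    | none => none
    | some none => if b = a then some (some M.start) else none
    | some (some s) => some (some (M.step s b))
  start := some none
  accept := {q | ∃ s ∈ M.accept, q = some (some s)}

lemma consDFA_step_none (M : DFA α σ) (a : α) [DecidableEq α] (b : α) :
    (consDFA M a).step none b = none := rfl

lemma consDFA_step_start (M : DFA α σ) (a : α) [DecidableEq α] (b : α) :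
    (consDFA M a).step (some none) b = if b = a then some (some M.start) else none := rfl

lemma consDFA_step_run (M : DFA α σ) (a : α) [DecidableEq α] (b : α) (s : σ) :
    (consDFA M a).step (some (some s)) b = some (some (M.step s b)) := rfl

lemma consDFA_dead (M : DFA α σ) (a : α) [DecidableEq α] (u : List α) :
    (consDFA M a).evalFrom none u = none := by
  induction u with
  | nil => rfl
  | cons b u ih => rw [show (consDFA M a).evalFrom none (b :: u)
      = (consDFA M a).evalFrom ((consDFA M a).step none b) u from rfl,
      consDFA_step_none]; exact ih

lemma consDFA_run (M : DFA α σ) (a : α) [DecidableEq α] (u : List α) (s : σ) :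
    (consDFA M a).evalFrom (some (some s)) u = some (some (M.evalFrom s u)) := by
  induction u generalizing s with
  | nil => rfl
  | cons b u ih =>
    rw [show (consDFA M a).evalFrom (some (some s)) (b :: u)
      = (consDFA M a).evalFrom ((consDFA M a).step (some (some s)) b) u from rfl,
      consDFA_step_run]
    exact ih (M.step s b)

lemma regular_cons [DecidableEq α] (a : α) {L : Language α} (h : L.IsRegular) :
    Language.IsRegular {w | ∃ v ∈ L, w = a :: v} := by
  obtain ⟨σ, _, M, rfl⟩ := h
  refine ⟨Option (Option σ), inferInstance, consDFA M a, ?_⟩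
  ext w
  cases w with
  | nil =>
    simp only [DFA.mem_accepts]
    constructor
    · rintro ⟨s, _, heq⟩
      exact absurd (show (some none : Option (Option σ)) = some (some s) from heq) (by simp)
    · rintro ⟨v, _, hv⟩; simp at hv
  | cons b u =>
    have hstep : (consDFA M a).eval (b :: u)
        = (consDFA M a).evalFrom ((consDFA M a).step (some none) b) u := rfl
    constructor
    · intro h
      rw [DFA.mem_accepts, hstep, consDFA_step_start] at h
      by_cases hb : b = a
      · rw [if_pos hb, consDFA_run] at h
        obtain ⟨s, hs, heq⟩ := h
        simp only [Option.some.injEq] at heq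
        exact ⟨u, by rw [DFA.mem_accepts, DFA.eval, heq]; exact hs, by rw [hb]⟩
      · rw [if_neg hb, consDFA_dead] at h
        obtain ⟨s, _, heq⟩ := h
        exact absurd heq (by simp)
    · rintro ⟨v, hv, heq⟩
      obtain ⟨hb, hu⟩ := List.cons.inj heq
      subst hb; subst hu
      rw [DFA.mem_accepts, hstep, consDFA_step_start, if_pos rfl, consDFA_run]
      exact ⟨M.eval u, hv, rfl⟩

lemma regular_replicate_append [DecidableEq α] (a : α) (r : ℕ) {L : Language α}
    (h : L.IsRegular) :
    Language.IsRegular {w | ∃ v ∈ L, w = List.replicate r a ++ v} := by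
  induction r with
  | zero =>
    have : {w | ∃ v ∈ L, w = List.replicate 0 a ++ v} = L := by
      ext w
      simp only [Set.mem_setOf_eq, List.replicate_zero, List.nil_append]
      constructor
      · rintro ⟨v, hv, rfl⟩; exact hv
      · intro hw; exact ⟨w, hw, rfl⟩
    rw [show ({w | ∃ v ∈ L, w = List.replicate 0 a ++ v} : Language α) = L from this]
    exact h
  | succ r ih =>
    have h2 := regular_cons a ih
    have : ({w | ∃ u ∈ {u | ∃ v ∈ L, u = List.replicate r a ++ v}, w = a :: u} : Language α)
        = {w | ∃ v ∈ L, w = List.replicate (r + 1) a ++ v} := by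
      ext w
      simp only [Set.mem_setOf_eq]
      constructor
      · rintro ⟨u, ⟨v, hv, rfl⟩, rfl⟩
        exact ⟨v, hv, by rw [List.replicate_succ]; rfl⟩
      · rintro ⟨v, hv, rfl⟩
        exact ⟨List.replicate r a ++ v, ⟨v, hv, rfl⟩, by rw [List.replicate_succ]; rfl⟩
    rw [← this]
    exact h2

/-- Auxiliary state-update function for the block DFA. -/
def blockExt (M : DFA α σ) (m : ℕ) (s : σ) (a : α) (c : ℕ) (hc : c ≤ m) :
    Option (σ × Option (α × Fin m)) :=
  if h : c = m then some (M.step s a, none)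
  else some (s, some (a, ⟨c, lt_of_le_of_ne hc h⟩))

/-- DFA accepting `{v.flatMap (List.replicate m) | v ∈ M.accepts}` for `m > 0`. -/
def blockDFA (M : DFA α σ) (m : ℕ) (hm : 0 < m) [DecidableEq α] :
    DFA α (Option (σ × Option (α × Fin m))) where
  step q b := match q with
    | none => none
    | some (s, none) => blockExt M m s b 1 hm
    | some (s, some (a, k)) =>
        if b = a then blockExt M m s a (k.val + 1) k.isLt else none
  start := some (M.start, none)
  accept := {q | ∃ s ∈ M.accept, q = some (s, none)}

variable (M : DFA α σ) (m : ℕ) (hm : 0 < m) [DecidableEq α]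

lemma blockDFA_step_none (b : α) : (blockDFA M m hm).step none b = none := rfl

lemma blockDFA_step_between (s : σ) (b : α) :
    (blockDFA M m hm).step (some (s, none)) b = blockExt M m s b 1 hm := rfl

lemma blockDFA_step_mid (s : σ) (a : α) (k : Fin m) (b : α) :
    (blockDFA M m hm).step (some (s, some (a, k))) b
      = if b = a then blockExt M m s a (k.val + 1) k.isLt else none := rfl

lemma blockDFA_dead (u : List α) : (blockDFA M m hm).evalFrom none u = none := by
  induction u with
  | nil => rfl
  | cons b u ih =>
    rw [show (blockDFA M m hm).evalFrom none (b :: u)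
      = (blockDFA M m hm).evalFrom ((blockDFA M m hm).step none b) u from rfl,
      blockDFA_step_none]; exact ih

lemma blockExt_replicate (s : σ) (a : α) :
    ∀ (j c : ℕ) (hc : c ≤ m), c + j = m →
      (blockDFA M m hm).evalFrom (blockExt M m s a c hc) (List.replicate j a)
        = some (M.step s a, none) := by
  intro j
  induction j with
  | zero =>
    intro c hc h
    have hcm : c = m := by omega
    simp [blockExt, hcm]
  | succ j ih =>
    intro c hc h
    have hcm : c ≠ m := by omega
    rw [List.replicate_succ,
      show (blockDFA M m hm).evalFrom (blockExt M m s a c hc) (a :: List.replicate j a)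
        = (blockDFA M m hm).evalFrom
            ((blockDFA M m hm).step (blockExt M m s a c hc) a) (List.replicate j a) from rfl]
    rw [show blockExt M m s a c hc = some (s, some (a, ⟨c, lt_of_le_of_ne hc hcm⟩)) from by
      simp [blockExt, hcm]]
    rw [blockDFA_step_mid, if_pos rfl]
    exact ih (c + 1) _ (by omega)

lemma blockDFA_bind (v : List α) : ∀ s : σ,
    (blockDFA M m hm).evalFrom (some (s, none)) (v.flatMap (List.replicate m))
      = some (M.evalFrom s v, none) := by
  induction v with
  | nil => intro s; rfl
  | cons a v ih =>
    intro s
    rw [show (a :: v).flatMap (List.replicate m) = List.replicate m a ++ v.flatMap (List.replicate m)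
      from rfl, DFA.evalFrom_of_append]
    have hrep : List.replicate m a = a :: List.replicate (m - 1) a := by
      conv_lhs => rw [show m = (m - 1) + 1 from by omega]
      rw [List.replicate_succ]
    rw [hrep,
      show (blockDFA M m hm).evalFrom (some (s, none)) (a :: List.replicate (m-1) a)
        = (blockDFA M m hm).evalFrom
            ((blockDFA M m hm).step (some (s, none)) a) (List.replicate (m-1) a) from rfl,
      blockDFA_step_between, blockExt_replicate M m hm s a (m-1) 1 hm (by omega)]
    rw [show M.evalFrom s (a :: v) = M.evalFrom (M.step s a) v from rfl]
    exact ih (M.step s a)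

lemma blockExt_accept_inv (u : List α) : ∀ (c : ℕ) (hc : c ≤ m) (s : σ) (a : α),
    (blockDFA M m hm).evalFrom (blockExt M m s a c hc) u ∈ (blockDFA M m hm).accept →
    ∃ u', u = List.replicate (m - c) a ++ u' ∧
      (blockDFA M m hm).evalFrom (some (M.step s a, none)) u' ∈ (blockDFA M m hm).accept := by
  induction u with
  | nil =>
    intro c hc s a h
    by_cases hcm : c = m
    · refine ⟨[], by simp [hcm], ?_⟩
      rw [show blockExt M m s a c hc = some (M.step s a, none) from by simp [blockExt, hcm]] at h
      exact h
    · exfalso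
      rw [show blockExt M m s a c hc = some (s, some (a, ⟨c, lt_of_le_of_ne hc hcm⟩)) from by
        simp [blockExt, hcm]] at h
      obtain ⟨t, _, heq⟩ := h
      simp at heq
  | cons b u ih =>
    intro c hc s a h
    by_cases hcm : c = m
    · refine ⟨b :: u, by simp [hcm], ?_⟩
      rw [show blockExt M m s a c hc = some (M.step s a, none) from by simp [blockExt, hcm]] at h
      exact h
    · rw [show blockExt M m s a c hc = some (s, some (a, ⟨c, lt_of_le_of_ne hc hcm⟩)) from by
        simp [blockExt, hcm],
        show (blockDFA M m hm).evalFrom (some (s, some (a, ⟨c, lt_of_le_of_ne hc hcm⟩))) (b :: u)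
          = (blockDFA M m hm).evalFrom
              ((blockDFA M m hm).step (some (s, some (a, ⟨c, lt_of_le_of_ne hc hcm⟩))) b) u
          from rfl, blockDFA_step_mid] at h
      by_cases hb : b = a
      · rw [if_pos hb] at h
        subst hb
        obtain ⟨u', hu', hacc⟩ := ih (c + 1) _ s b h
        refine ⟨u', ?_, hacc⟩
        rw [hu']
        rw [show m - c = (m - (c + 1)) + 1 from by omega, List.replicate_succ]
        rfl
      · exfalso
        rw [if_neg hb, blockDFA_dead] at h
        obtain ⟨t, _, heq⟩ := h
        simp at heq

lemma blockDFA_accept_inv : ∀ (N : ℕ) (u : List α), u.length ≤ N → ∀ s : σ,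
    (blockDFA M m hm).evalFrom (some (s, none)) u ∈ (blockDFA M m hm).accept →
    ∃ v, u = v.flatMap (List.replicate m) ∧ M.evalFrom s v ∈ M.accept := by
  intro N
  induction N with
  | zero =>
    intro u hu s h
    rw [List.length_eq_zero_iff.mp (Nat.le_zero.mp hu)] at h ⊢
    obtain ⟨t, ht, heq⟩ := h
    refine ⟨[], rfl, ?_⟩
    have heq' : (some (s, none) : Option (σ × Option (α × Fin m))) = some (t, none) := heq
    simp only [Option.some.injEq, Prod.mk.injEq] at heq'
    rw [show M.evalFrom s [] = s from rfl, heq'.1]; exact ht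
  | succ N ih =>
    intro u hu s h
    cases u with
    | nil =>
      obtain ⟨t, ht, heq⟩ := h
      refine ⟨[], rfl, ?_⟩
      have heq' : (some (s, none) : Option (σ × Option (α × Fin m))) = some (t, none) := heq
      simp only [Option.some.injEq, Prod.mk.injEq] at heq'
      rw [show M.evalFrom s [] = s from rfl, heq'.1]; exact ht
    | cons b u =>
      rw [show (blockDFA M m hm).evalFrom (some (s, none)) (b :: u)
          = (blockDFA M m hm).evalFrom ((blockDFA M m hm).step (some (s, none)) b) u from rfl,
        blockDFA_step_between] at h
      obtain ⟨u', hu', hacc⟩ := blockExt_accept_inv M m hm u 1 hm s b h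
      have hlen : u'.length ≤ N := by
        have := congrArg List.length hu'
        simp only [List.length_cons, List.length_append, List.length_replicate] at hu this
        omega
      obtain ⟨v, hv, hvacc⟩ := ih u' hlen (M.step s b) hacc
      refine ⟨b :: v, ?_, hvacc⟩
      rw [show (b :: v).flatMap (List.replicate m) = List.replicate m b ++ v.flatMap (List.replicate m)
        from rfl, hu', hv,
        show List.replicate m b = b :: List.replicate (m - 1) b from by
          conv_lhs => rw [show m = (m - 1) + 1 from by omega]
          rw [List.replicate_succ]]
      rfl

include hm in
lemma regular_bind_replicate [Fintype α] {L : Language α} (h : L.IsRegular) :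
    Language.IsRegular {w | ∃ v ∈ L, w = v.flatMap (List.replicate m)} := by
  obtain ⟨σ, _, M, rfl⟩ := h
  refine ⟨Option (σ × Option (α × Fin m)), inferInstance, blockDFA M m hm, ?_⟩
  ext w
  constructor
  · intro hw
    rw [DFA.mem_accepts] at hw
    obtain ⟨v, hv, hvacc⟩ := blockDFA_accept_inv M m hm w.length w le_rfl M.start hw
    exact ⟨v, hvacc, hv⟩
  · rintro ⟨v, hv, rfl⟩
    rw [DFA.mem_accepts, DFA.eval, show (blockDFA M m hm).start = some (M.start, none) from rfl,
      blockDFA_bind]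
    exact ⟨M.evalFrom M.start v, hv, rfl⟩

end Automata

/-! ### The encoding of a scaled tuple -/

lemma range_map_div {β : Type*} (m M : ℕ) (hm : 0 < m) (f : ℕ → β) :
    (List.range (m * M)).map (fun j => f (j / m))
      = ((List.range M).map f).flatMap (List.replicate m) := by
  induction M with
  | zero => simp
  | succ M ih =>
    rw [Nat.mul_succ, List.range_add, List.map_append, ih, List.range_succ, List.map_append,
      show ((List.range M).map f ++ List.map f [M]).flatMap (List.replicate m)
        = ((List.range M).map f).flatMap (List.replicate m)
          ++ (List.map f [M]).flatMap (List.replicate m) from List.flatMap_append]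
    congr 1
    rw [List.map_map, show (List.map f [M]).flatMap (List.replicate m) = List.replicate m (f M)
      from by simp]
    rw [show ((fun j => f (j / m)) ∘ (fun j => m * M + j)) = fun j : ℕ => f (M + j / m) from by
      funext j; simp [Nat.mul_add_div hm]]
    rw [show (List.range m).map (fun j : ℕ => f (M + j / m))
        = (List.range m).map (fun _ => f M) from by
      apply List.map_congr_left
      intro j hj
      rw [List.mem_range] at hj
      rw [Nat.div_eq_of_lt hj, Nat.add_zero]]
    rw [List.map_const', List.length_range]

lemma encVec_scaled {n : ℕ} (hn : 0 < n) (m r : ℕ) (hm : 0 < m) (x : Fin n → ℕ) :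
    encVec (fun i => m * x i + r)
      = List.replicate r (fun _ => true) ++ (encVec x).flatMap (List.replicate m) := by
  have hne : (Finset.univ : Finset (Fin n)).Nonempty := ⟨⟨0, hn⟩, Finset.mem_univ _⟩
  have hmono : Monotone (fun t : ℕ => m * t + r) := by
    intro a b hab
    exact Nat.add_le_add_right (Nat.mul_le_mul_left m hab) r
  have hsup : Finset.univ.sup (fun i => m * x i + r) = m * Finset.univ.sup x + r := by
    rw [← Finset.sup'_eq_sup hne, ← Finset.sup'_eq_sup hne x,
      show (fun i => m * x i + r) = (fun t => m * t + r) ∘ x from rfl,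
      ← Finset.comp_sup'_eq_sup'_comp hne (fun t => m * t + r) (fun a b => by
        exact hmono.map_max)]
  set M := Finset.univ.sup x with hM
  unfold encVec
  rw [hsup, show m * M + r = r + m * M from by omega, List.range_add, List.map_append]
  congr 1
  · rw [show (List.range r).map (fun j (i : Fin n) => decide (j < m * x i + r))
        = (List.range r).map (fun _ (_ : Fin n) => true) from by
      apply List.map_congr_left
      intro j hj
      rw [List.mem_range] at hj
      funext i
      simp [Nat.lt_of_lt_of_le hj (Nat.le_add_left r (m * x i))]]
    rw [List.map_const', List.length_range]
  · rw [List.map_map, ← range_map_div m M hm]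
    apply List.map_congr_left
    intro j _
    simp only [Function.comp_apply]
    funext i
    rw [decide_eq_decide]
    have key : j / m < x i ↔ j < m * x i := by
      rw [Nat.div_lt_iff_lt_mul hm, Nat.mul_comm]
    rw [key]
    omega

lemma encVec_zero (x : Fin 0 → ℕ) : encVec x = [] := by
  simp [encVec]

/-! ### Part 1 -/

lemma syncRelN_scaled (n : ℕ) (R : Set (Fin n → ℕ)) (m r : ℕ) (hr : r < m)
    (h : SyncRelN R) : SyncRelN {y | ∃ x ∈ R, y = fun i => m * x i + r} := by
  have hm : 0 < m := Nat.lt_of_le_of_lt (Nat.zero_le r) hr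
  rcases Nat.eq_zero_or_pos n with hn | hn
  · subst hn
    unfold SyncRelN at h ⊢
    have heq : {w : List (Fin 0 → Bool) |
          ∃ y ∈ {y | ∃ x ∈ R, y = fun i => m * x i + r}, encVec y = w}
        = {w | ∃ x ∈ R, encVec x = w} := by
      ext w
      simp only [Set.mem_setOf_eq]
      constructor
      · rintro ⟨y, ⟨x, hx, rfl⟩, hw⟩
        exact ⟨x, hx, by rw [encVec_zero] at hw ⊢; exact hw⟩
      · rintro ⟨x, hx, hw⟩
        exact ⟨fun i => m * x i + r, ⟨x, hx, rfl⟩, by rw [encVec_zero] at hw ⊢; exact hw⟩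
    rw [heq]
    exact h
  · unfold SyncRelN at h ⊢
    have h2 := regular_bind_replicate m hm h
    have h3 := regular_replicate_append (fun _ : Fin n => true) r h2
    have heq : {w : List (Fin n → Bool) |
          ∃ y ∈ {y | ∃ x ∈ R, y = fun i => m * x i + r}, encVec y = w}
        = {w | ∃ v ∈ {w | ∃ v ∈ {w | ∃ x ∈ R, encVec x = w}, w = v.flatMap (List.replicate m)},
            w = List.replicate r (fun _ => true) ++ v} := by
      ext w
      simp only [Set.mem_setOf_eq]
      constructor
      · rintro ⟨y, ⟨x, hx, rfl⟩, rfl⟩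
        exact ⟨(encVec x).flatMap (List.replicate m), ⟨encVec x, ⟨x, hx, rfl⟩, rfl⟩,
          encVec_scaled hn m r hm x⟩
      · rintro ⟨u, ⟨v, ⟨x, hx, rfl⟩, rfl⟩, rfl⟩
        exact ⟨fun i => m * x i + r, ⟨x, hx, rfl⟩, encVec_scaled hn m r hm x⟩
    rw [heq]
    exact h3

/-! ### Main theorem -/

theorem scaled_relation_sync :
    (∀ (n : ℕ) (R : Set (Fin n → ℕ)) (m r : ℕ), r < m → SyncRelN R →
      SyncRelN {y | ∃ x ∈ R, y = fun i => m * x i + r}) ∧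
    (∀ (R : ℕ → ℕ → Prop) (m r : ℕ), r < m → SyncRel2 R → IsOrderRel R →
      SyncRel2 (scaledRel R m r) ∧ IsOrderRel (scaledRel R m r) ∧
      Nonempty (restrict (scaledRel R m r) ≃r restrict R)) := by
  constructor
  · exact fun n R m r hr h => syncRelN_scaled n R m r hr h
  · intro R m r hr hsync hord
    have hm : 0 < m := Nat.lt_of_le_of_lt (Nat.zero_le r) hr
    have hinj : ∀ a b : ℕ, m * a + r = m * b + r → a = b := by
      intro a b hab
      have : m * a = m * b := by omega
      exact Nat.eq_of_mul_eq_mul_left hm this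
    refine ⟨?_, ⟨?_, ?_⟩, ?_⟩
    · -- synchronicity
      unfold SyncRel2
      have hset : {x : Fin 2 → ℕ | scaledRel R m r (x 0) (x 1)}
          = {y | ∃ x ∈ {x : Fin 2 → ℕ | R (x 0) (x 1)}, y = fun i => m * x i + r} := by
        ext y
        simp only [Set.mem_setOf_eq, scaledRel]
        constructor
        · rintro ⟨a, b, hab, h0, h1⟩
          refine ⟨![a, b], by simpa using hab, ?_⟩
          funext i
          fin_cases i
          · simpa using h0
          · simpa using h1
        · rintro ⟨x, hx, rfl⟩
          exact ⟨x 0, x 1, hx, rfl, rfl⟩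
      rw [hset]
      exact syncRelN_scaled 2 _ m r hr hsync
    · -- transitivity
      rintro a b c ⟨x, y, hxy, rfl, rfl⟩ ⟨y', z, hyz, hy, rfl⟩
      have : y = y' := hinj _ _ hy
      subst this
      exact ⟨x, z, hord.1 _ _ _ hxy hyz, rfl, rfl⟩
    · -- no 2-cycle
      rintro ⟨a, b, ⟨x, y, hxy, rfl, rfl⟩, ⟨y', x', hyx, hy, hx⟩⟩
      have h1 : y = y' := hinj _ _ hy
      have h2 : x = x' := hinj _ _ hx
      exact hord.2 ⟨x, y, hxy, by rw [h1, h2]; exact hyx⟩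
    · -- order isomorphism
      have hmap : ∀ x : ℕ, x ∈ supp R → (m * x + r) ∈ supp (scaledRel R m r) := by
        rintro x ⟨y, hy | hy⟩
        · exact ⟨m * y + r, Or.inl ⟨x, y, hy, rfl, rfl⟩⟩
        · exact ⟨m * y + r, Or.inr ⟨y, x, hy, rfl, rfl⟩⟩
      have hbij : Function.Bijective
          (fun p : supp R => (⟨m * p.1 + r, hmap p.1 p.2⟩ : supp (scaledRel R m r))) := by
        constructor
        · rintro ⟨a, ha⟩ ⟨b, hb⟩ hab
          simp only [Subtype.mk.injEq] at hab
          exact Subtype.ext (hinj _ _ hab)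
        · rintro ⟨a, ha⟩
          obtain ⟨b, hb | hb⟩ := ha
          · obtain ⟨x, y, hxy, rfl, rfl⟩ := hb
            exact ⟨⟨x, ⟨y, Or.inl hxy⟩⟩, rfl⟩
          · obtain ⟨x, y, hxy, rfl, rfl⟩ := hb
            exact ⟨⟨y, ⟨x, Or.inr hxy⟩⟩, rfl⟩
      refine ⟨RelIso.symm ⟨Equiv.ofBijective _ hbij, ?_⟩⟩
      rintro ⟨a, ha⟩ ⟨b, hb⟩
      simp only [Equiv.ofBijective_apply]
      constructor
      · rintro ⟨x, y, hxy, hx, hy⟩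
        show R a b
        rw [hinj _ _ hx, hinj _ _ hy]
        exact hxy
      · intro hab
        exact ⟨a, b, hab, rfl, rfl⟩
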